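/- Let A be an admissible twig. Then there exists a unique admissible twig B such that d(B̄)·d(A) = d(B)·(d(A) − d(A̲)); moreover this B (the adjoint A* of A) satisfies d(B) = d(A) and d(B̄) = d(A) − d(A̲). -/

import Mathlib

open Matrix BigOperators

/-- The intersection-type matrix of a twig `A = [a_1,...,a_r]`: the `r × r` symmetric
tridiagonal matrix with diagonal entries `a_1,...,a_r` and `-1` on the sub/super-diagonals. -/
def twigMatrix (A : List ℤ) : Matrix (Fin A.length) (Fin A.length) ℤ :=
  fun i j =>
    if i = j then A.get i
    else if (i : ℕ) + 1 = (j : ℕ) ∨ (j : ℕ) + 1 = (i : ℕ) then -1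
    else 0

/-- The determinant `d(A)` of a twig; in particular `d([]) = 1`. -/
def twigDet (A : List ℤ) : ℤ := (twigMatrix A).det

/-- A twig is admissible if it is nonempty and all its entries are `≥ 2`. -/
def Admissible (A : List ℤ) : Prop := A ≠ [] ∧ ∀ a ∈ A, 2 ≤ a

lemma twigDet_nil : twigDet [] = 1 := Matrix.det_fin_zero

lemma twigDet_singleton (a : ℤ) : twigDet [a] = a := by
  rw [twigDet, Matrix.det_fin_one, twigMatrix]
  simp

lemma tm_adj (A : List ℤ) (i j : Fin A.length)
    (h : (i : ℕ) + 1 = (j : ℕ) ∨ (j : ℕ) + 1 = (i : ℕ)) : twigMatrix A i j = -1 := by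
  have hne : i ≠ j := by
    intro e; subst e; omega
  rw [twigMatrix]
  rw [if_neg hne, if_pos h]

lemma tm_zero (A : List ℤ) (i j : Fin A.length)
    (h1 : (i : ℕ) ≠ (j : ℕ)) (h2 : (i : ℕ) + 1 ≠ (j : ℕ)) (h3 : (j : ℕ) + 1 ≠ (i : ℕ)) :
    twigMatrix A i j = 0 := by
  rw [twigMatrix]
  rw [if_neg (fun e => h1 (congrArg Fin.val e)), if_neg (by omega)]

lemma twigMatrix_submatrix (a : ℤ) (l : List ℤ) :
    (twigMatrix (a :: l)).submatrix Fin.succ Fin.succ = twigMatrix l := by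
  ext i j
  simp only [Matrix.submatrix_apply, twigMatrix, Fin.succ_inj]
  by_cases h : i = j
  · subst h; simp
  · rw [if_neg h, if_neg h]
    have : ((i.succ : ℕ) + 1 = (j.succ : ℕ) ∨ (j.succ : ℕ) + 1 = (i.succ : ℕ)) ↔
        ((i : ℕ) + 1 = (j : ℕ) ∨ (j : ℕ) + 1 = (i : ℕ)) := by
      simp only [Fin.val_succ]; omega
    rw [if_congr this rfl rfl]

lemma twigDet_cons (a b : ℤ) (l : List ℤ) :
    twigDet (a :: b :: l) = a * twigDet (b :: l) - twigDet l := by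
  rw [twigDet]
  erw [Matrix.det_succ_row_zero]
  simp only [List.length_cons]
  rw [Fin.sum_univ_succ, Fin.sum_univ_succ]
  have hz : ∀ i : Fin l.length,
      twigMatrix (a :: b :: l) (0 : Fin (l.length + 1 + 1)) i.succ.succ = 0 := by
    intro i
    apply tm_zero <;> simp [Fin.val_succ]
  have h1eq : (1 : Fin (l.length + 1 + 1)) = (0 : Fin (l.length + 1)).succ := rfl
  have hsa0 : (1 : Fin (l.length + 1 + 1)).succAbove (0 : Fin (l.length + 1)) =
      (0 : Fin (l.length + 1 + 1)) := by
    rw [h1eq, Fin.succ_succAbove_zero]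
  have hsas : ∀ j : Fin l.length,
      (1 : Fin (l.length + 1 + 1)).succAbove j.succ = j.succ.succ := by
    intro j
    rw [h1eq, Fin.succ_succAbove_succ, Fin.succAbove_zero]
  have h01 : twigMatrix (a :: b :: l) (0 : Fin (l.length + 1 + 1))
      (1 : Fin (l.length + 1 + 1)) = -1 := by
    apply tm_adj; simp
  have h00 : twigMatrix (a :: b :: l) (0 : Fin (l.length + 1 + 1))
      (0 : Fin (l.length + 1 + 1)) = a := by
    rw [twigMatrix, if_pos rfl]; rfl
  have hD1 : ((twigMatrix (a :: b :: l)).submatrix Fin.succ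
      (Fin.succAbove (1 : Fin (l.length + 1 + 1)))).det = - twigDet l := by
    erw [Matrix.det_succ_column_zero]
    rw [Fin.sum_univ_succ]
    have hcol : ∀ i : Fin l.length,
        (twigMatrix (a :: b :: l)).submatrix Fin.succ
          (Fin.succAbove (1 : Fin (l.length + 1 + 1))) i.succ (0 : Fin (l.length + 1)) = 0 := by
      intro i
      rw [Matrix.submatrix_apply, hsa0]
      apply tm_zero <;> simp [Fin.val_succ]
    have hc00 : (twigMatrix (a :: b :: l)).submatrix Fin.succ
        (Fin.succAbove (1 : Fin (l.length + 1 + 1))) (0 : Fin (l.length + 1))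
          (0 : Fin (l.length + 1)) = -1 := by
      rw [Matrix.submatrix_apply, hsa0]
      apply tm_adj; simp
    have hmin : ((twigMatrix (a :: b :: l)).submatrix Fin.succ
        (Fin.succAbove (1 : Fin (l.length + 1 + 1)))).submatrix
          (Fin.succAbove (0 : Fin (l.length + 1))) Fin.succ = twigMatrix l := by
      have he : ((twigMatrix (a :: b :: l)).submatrix Fin.succ
          (Fin.succAbove (1 : Fin (l.length + 1 + 1)))).submatrix
            (Fin.succAbove (0 : Fin (l.length + 1))) Fin.succ
          = ((twigMatrix (a :: b :: l)).submatrix Fin.succ Fin.succ).submatrix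
              Fin.succ Fin.succ := by
        ext i j
        simp only [Matrix.submatrix_apply, Fin.succAbove_zero, hsas]
      rw [he, twigMatrix_submatrix, twigMatrix_submatrix]
    simp only [hcol, hc00, hmin]
    simp [twigDet]
  simp only [hz, h01, hD1, Fin.succAbove_zero, twigMatrix_submatrix, h00]
  simp [twigDet]
  rw [h01]
  simp only [List.length_cons] at hD1
  rw [hD1]
  have hs := congrArg Matrix.det (twigMatrix_submatrix a (b :: l))
  simp only [List.length_cons] at hs
  rw [hs, twigDet.eq_1 l]; ring

/-- The pair `(d(A), d(Ā))` computed by the front recursion. -/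
def twigP : List ℤ → ℤ × ℤ
  | [] => (1, 0)
  | a :: l => (a * (twigP l).1 - (twigP l).2, (twigP l).1)

lemma twigP_fst : (A : List ℤ) → (twigP A).1 = twigDet A
  | [] => twigDet_nil.symm
  | [a] => by rw [twigDet_singleton]; show a * 1 - 0 = a; ring
  | a :: b :: l => by
      rw [twigDet_cons, ← twigP_fst (b :: l), ← twigP_fst l]
      show a * (twigP (b :: l)).1 - (twigP (b :: l)).2 = _
      rfl

lemma twigP_snd (a : ℤ) (l : List ℤ) : (twigP (a :: l)).2 = twigDet l := by
  rw [← twigP_fst]; rfl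

/-- Key numeric facts about `twigP` on lists with entries `≥ 2`. -/
lemma twigP_good : ∀ (l : List ℤ), (∀ x ∈ l, 2 ≤ x) →
    0 ≤ (twigP l).2 ∧ (twigP l).2 < (twigP l).1 ∧ IsCoprime (twigP l).1 (twigP l).2 ∧
      (l ≠ [] → 1 ≤ (twigP l).2)
  | [], _ => by
      refine ⟨le_refl 0, one_pos, isCoprime_one_left, fun h => absurd rfl h⟩
  | a :: l, h => by
      obtain ⟨h0, h1, h2, _⟩ := twigP_good l (fun x hx => h x (List.mem_cons_of_mem a hx))
      have ha : 2 ≤ a := h a (List.mem_cons_self)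
      set d := (twigP l).1 with hd
      set e := (twigP l).2 with he
      have hfst : (twigP (a :: l)).1 = a * d - e := rfl
      have hsnd : (twigP (a :: l)).2 = d := rfl
      rw [hfst, hsnd]
      have hd1 : 1 ≤ d := by omega
      refine ⟨by omega, by nlinarith, ?_, fun _ => by omega⟩
      have : IsCoprime d (-e + d * a) := (h2.neg_right).add_mul_left_right a
      have heq : a * d - e = -e + d * a := by ring
      rw [heq]
      exact this.symm

lemma twigP_inj : ∀ (B : List ℤ), ∀ (C : List ℤ), (∀ x ∈ B, 2 ≤ x) → (∀ x ∈ C, 2 ≤ x) →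
    twigP B = twigP C → B = C
  | [], [], _, _, _ => rfl
  | [], c :: C', _, hC, h => by
      obtain ⟨_, _, _, h4⟩ := twigP_good (c :: C') hC
      have h5 := h4 (by simp)
      rw [← h] at h5
      simp [twigP] at h5
  | b :: B', [], hB, _, h => by
      obtain ⟨_, _, _, h4⟩ := twigP_good (b :: B') hB
      have h5 := h4 (by simp)
      rw [h] at h5
      simp [twigP] at h5
  | b :: B', c :: C', hB, hC, h => by
      obtain ⟨hB0, hB1, _, _⟩ := twigP_good B' (fun x hx => hB x (List.mem_cons_of_mem b hx))
      obtain ⟨hC0, hC1, _, _⟩ := twigP_good C' (fun x hx => hC x (List.mem_cons_of_mem c hx))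
      have hb : 2 ≤ b := hB b (List.mem_cons_self)
      have hc : 2 ≤ c := hC c (List.mem_cons_self)
      have h2 : (twigP (b :: B')).2 = (twigP (c :: C')).2 := by rw [h]
      have h1 : (twigP (b :: B')).1 = (twigP (c :: C')).1 := by rw [h]
      have hd : (twigP B').1 = (twigP C').1 := h2
      have h1' : b * (twigP B').1 - (twigP B').2 = c * (twigP C').1 - (twigP C').2 := h1
      rw [← hd] at h1' hC1
      have hbc : b = c := by nlinarith
      have he : (twigP B').2 = (twigP C').2 := by
        rw [hbc] at h1'; omega
      have : B' = C' := twigP_inj B' C'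
        (fun x hx => hB x (List.mem_cons_of_mem b hx))
        (fun x hx => hC x (List.mem_cons_of_mem c hx))
        (Prod.ext (hd) he)
      rw [hbc, this]

lemma twigP_exists : ∀ (k : ℕ) (n q : ℤ), q.toNat ≤ k → 0 < q → q < n → IsCoprime n q →
    ∃ B : List ℤ, B ≠ [] ∧ (∀ x ∈ B, 2 ≤ x) ∧ twigP B = (n, q) := by
  intro k
  induction k with
  | zero => intro n q hk hq _ _; omega
  | succ k ih =>
    intro n q hk hq hqn hco
    by_cases hq1 : q = 1
    · subst hq1
      refine ⟨[n], by simp, by intro x hx; simp at hx; omega, ?_⟩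
      show (n * 1 - 0, 1) = (n, 1)
      norm_num
    · have hq2 : 2 ≤ q := by omega
      have hm0 : 0 ≤ n % q := Int.emod_nonneg n (by omega)
      have hmq : n % q < q := Int.emod_lt_of_pos n hq
      have hdm : q * (n / q) + n % q = n := Int.mul_ediv_add_emod n q
      have hmne : n % q ≠ 0 := by
        intro h0
        have hdvd : q ∣ n := Int.dvd_of_emod_eq_zero h0
        have := hco.symm.isUnit_of_dvd' dvd_rfl hdvd
        rw [Int.isUnit_iff] at this
        omega
      set a : ℤ := n / q + 1 with hadef
      set r : ℤ := q - n % q with hrdef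
      have hr0 : 0 < r := by omega
      have hrq : r < q := by omega
      have har : a * q - r = n := by
        rw [hadef, hrdef]; linarith [hdm]
      have ha2 : 2 ≤ a := by nlinarith
      have hcor : IsCoprime q r := by
        have : IsCoprime q (-n + q * a) := (hco.symm.neg_right).add_mul_left_right a
        have heq : r = -n + q * a := by linarith
        rw [heq]; exact this
      obtain ⟨B', hB'ne, hB'ge, hB'P⟩ := ih q r (by omega) hr0 hrq hcor
      refine ⟨a :: B', by simp, ?_, ?_⟩
      · intro x hx
        rcases List.mem_cons.mp hx with h | h
        · omega
        · exact hB'ge x h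
      · show (a * (twigP B').1 - (twigP B').2, (twigP B').1) = (n, q)
        rw [hB'P]
        simp only [Prod.mk.injEq]
        exact ⟨by linarith, trivial⟩

lemma twigDet_reverse (A : List ℤ) : twigDet A.reverse = twigDet A := by
  rw [twigDet, twigDet]
  have hlen : A.reverse.length = A.length := List.length_reverse
  let f : Fin A.reverse.length ≃ Fin A.length := (finCongr hlen).trans (Fin.revPerm)
  have hval : ∀ i : Fin A.reverse.length, ((f i : Fin A.length) : ℕ) = A.length - 1 - (i : ℕ) := by
    intro i
    show ((Fin.rev (Fin.cast hlen i)) : ℕ) = A.length - 1 - (i : ℕ)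
    rw [Fin.val_rev]
    simp [Fin.val_cast_of_lt]
    omega
  have hM : twigMatrix A.reverse = (twigMatrix A).submatrix f f := by
    ext i j
    have hi : (i : ℕ) < A.length := by
      have := i.isLt; omega
    have hj : (j : ℕ) < A.length := by
      have := j.isLt; omega
    simp only [Matrix.submatrix_apply, twigMatrix]
    by_cases h : i = j
    · subst h
      rw [if_pos rfl, if_pos rfl]
      simp only [List.get_eq_getElem]
      rw [List.getElem_reverse]
      congr 1
      rw [hval]
    · have hfij : f i ≠ f j := fun e => h (f.injective e)
      rw [if_neg h, if_neg hfij]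
      have : (((f i) : ℕ) + 1 = ((f j) : ℕ) ∨ ((f j) : ℕ) + 1 = ((f i) : ℕ)) ↔
          ((i : ℕ) + 1 = (j : ℕ) ∨ (j : ℕ) + 1 = (i : ℕ)) := by
        rw [hval, hval]
        have hne : (i : ℕ) ≠ (j : ℕ) := fun e => h (Fin.ext e)
        omega
      rw [if_congr this rfl rfl]
  rw [hM, Matrix.det_submatrix_equiv_self]

lemma twigP_eq (B : List ℤ) (hBne : B ≠ []) : twigP B = (twigDet B, twigDet B.tail) := by
  obtain ⟨b, B', rfl⟩ := List.exists_cons_of_ne_nil hBne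
  exact Prod.ext (twigP_fst _) (twigP_snd b B')


/-- for an admissible twig `A` there is a unique admissible twig `B`
with `d(B̄)·d(A) = d(B)·(d(A) − d(A̲))`; moreover any such `B` (the adjoint `A*`)
satisfies `d(B) = d(A)` and `d(B̄) = d(A) − d(A̲)`. -/
theorem stmt4 (A : List ℤ) (hA : Admissible A) :
    (∃! B : List ℤ, Admissible B ∧
      twigDet B.tail * twigDet A = twigDet B * (twigDet A - twigDet A.dropLast)) ∧
    (∀ B : List ℤ, Admissible B →
      twigDet B.tail * twigDet A = twigDet B * (twigDet A - twigDet A.dropLast) →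
      twigDet B = twigDet A ∧ twigDet B.tail = twigDet A - twigDet A.dropLast) := by
  obtain ⟨hAne, hAge⟩ := hA
  have hRne : A.reverse ≠ [] := by simpa using hAne
  have hRge : ∀ x ∈ A.reverse, 2 ≤ x := fun x hx => hAge x (List.mem_reverse.mp hx)
  have hPR : twigP A.reverse = (twigDet A, twigDet A.dropLast) := by
    rw [twigP_eq A.reverse hRne, List.tail_reverse,
      twigDet_reverse, twigDet_reverse]
  obtain ⟨hq0, hqn, hco, hq1'⟩ := twigP_good A.reverse hRge
  rw [hPR] at hq0 hqn hco hq1'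
  simp only at hq0 hqn hco hq1'
  have hq1 : 1 ≤ twigDet A.dropLast := hq1' hRne
  set n := twigDet A with hn
  set q := twigDet A.dropLast with hqd
  have hn0 : 0 < n := by omega
  have hco' : IsCoprime n (n - q) := by
    have : IsCoprime n (-q + n * 1) := (hco.neg_right).add_mul_left_right 1
    have heq : n - q = -q + n * 1 := by ring
    rw [heq]; exact this
  have key : ∀ B : List ℤ, Admissible B →
      twigDet B.tail * n = twigDet B * (n - q) →
      twigDet B = n ∧ twigDet B.tail = n - q := by
    intro B hB heq
    obtain ⟨hBne, hBge⟩ := hB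
    have hPB := twigP_eq B hBne
    obtain ⟨hf0, hfm, hcoB, hf1'⟩ := twigP_good B hBge
    rw [hPB] at hf0 hfm hcoB hf1'
    simp only at hf0 hfm hcoB hf1'
    have hf1 : 1 ≤ twigDet B.tail := hf1' hBne
    have hm0 : 0 < twigDet B := by omega
    have d1 : twigDet B ∣ n := by
      have hd : twigDet B ∣ twigDet B.tail * n := by
        rw [heq]; exact Dvd.intro _ rfl
      exact hcoB.dvd_of_dvd_mul_left hd
    have d2 : n ∣ twigDet B := by
      have hd : n ∣ twigDet B * (n - q) := by
        rw [← heq]; exact dvd_mul_left n _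
      exact hco'.dvd_of_dvd_mul_right hd
    have hmn : twigDet B = n := Int.dvd_antisymm (le_of_lt hm0) (le_of_lt hn0) d1 d2
    refine ⟨hmn, ?_⟩
    rw [hmn, mul_comm] at heq
    exact mul_left_cancel₀ (show n ≠ 0 by omega) heq
  obtain ⟨B₀, hB₀ne, hB₀ge, hB₀P⟩ := twigP_exists (n - q).toNat n (n - q) le_rfl
    (by omega) (by omega) hco'
  rw [twigP_eq B₀ hB₀ne] at hB₀P
  have hB₀det : twigDet B₀ = n := congrArg Prod.fst hB₀P
  have hB₀tail : twigDet B₀.tail = n - q := congrArg Prod.snd hB₀P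
  refine ⟨⟨B₀, ⟨⟨hB₀ne, hB₀ge⟩, ?_⟩, ?_⟩, key⟩
  · rw [hB₀det, hB₀tail]; ring
  · intro y hy
    obtain ⟨hyadm, hyeq⟩ := hy
    obtain ⟨hy1, hy2⟩ := key y hyadm hyeq
    apply twigP_inj y B₀ hyadm.2 hB₀ge
    rw [twigP_eq y hyadm.1, twigP_eq B₀ hB₀ne, hy1, hy2, hB₀det, hB₀tail]
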